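/- arXiv:1502.03706 — 2 statements merged into one kernel-verified Lean document; each statement's English description precedes it below -/
import Mathlib

section
/- Let g be the 6-dimensional real Lie algebra with basis e1, e2, e3, f1, f2, f3 and Lie brackets [e1,e2]=2e3, [e1,e3]=−2e2, [e2,e3]=2e1, [f1,f2]=2f3, [f1,f3]=−2f2, [f2,f3]=2f1, and [ei,fj]=0 for all i,j, and let g_ℂ = ℂ⊗g be its complexification. Set Zb1 := (e1+i e2)/2, Zb2 := (f1+i f2)/2, Z3 := (e3−i f3)/2, Zb3 := (e3+i f3)/2 in g_ℂ. Then for every t ∈ ℂ, the ℂ-linear span W_t of { Zb1, Zb2, Zb3 + t·Z3 } is a Lie subalgebra of g_ℂ. -/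
open Matrix

noncomputable section

/-- The complexification `g_ℂ = ℂ ⊗ g` of `g = su(2) ⊕ su(2)`, as `ℂ³ × ℂ³`. -/
abbrev gC : Type := (Fin 3 → ℂ) × (Fin 3 → ℂ)

/-- The basis `e1, e2, e3` of (the complexification of) the first copy of `su(2)`. -/
def e (i : Fin 3) : gC := (Pi.single i 1, 0)

/-- The basis `f1, f2, f3` of (the complexification of) the second copy of `su(2)`. -/
def f (i : Fin 3) : gC := (0, Pi.single i 1)

/-- The (complexified) Lie bracket of `g`: twice the cross product on each factor.
In the bases `e`, `f` this realizes exactly `[e1,e2] = 2e3`, `[e1,e3] = -2e2`,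
`[e2,e3] = 2e1`, `[f1,f2] = 2f3`, `[f1,f3] = -2f2`, `[f2,f3] = 2f1`, `[ei,fj] = 0`. -/
def brk (x y : gC) : gC := ((2 : ℂ) • (x.1 ⨯₃ y.1), (2 : ℂ) • (x.2 ⨯₃ y.2))

/-- `Zb1 = (e1 + i e2)/2`. -/
def Zb1 : gC := (2⁻¹ : ℂ) • (e 0 + Complex.I • e 1)

/-- `Zb2 = (f1 + i f2)/2`. -/
def Zb2 : gC := (2⁻¹ : ℂ) • (f 0 + Complex.I • f 1)

/-- `Z3 = (e3 - i f3)/2`. -/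
def Z3 : gC := (2⁻¹ : ℂ) • (e 2 - Complex.I • f 2)

/-- `Zb3 = (e3 + i f3)/2`. -/
def Zb3 : gC := (2⁻¹ : ℂ) • (e 2 + Complex.I • f 2)

/-- The span `W_t` of `{Zb1, Zb2, Zb3 + t Z3}`, i.e. the `(0,1)`-tangent space of the
deformed almost complex structure `J_t` on `S³×S³`. -/
def W (t : ℂ) : Submodule ℂ gC := Submodule.span ℂ {Zb1, Zb2, Zb3 + t • Z3}


lemma brk_add_left (x y z : gC) : brk (x + y) z = brk x z + brk y z := by
  simp [brk, Prod.ext_iff, map_add, smul_add, Prod.add_def]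

lemma brk_add_right (x y z : gC) : brk x (y + z) = brk x y + brk x z := by
  simp [brk, Prod.ext_iff, map_add, smul_add, Prod.add_def]

lemma brk_smul_left (c : ℂ) (x y : gC) : brk (c • x) y = c • brk x y := by
  simp [brk, Prod.ext_iff, _root_.map_smul, Prod.smul_def, smul_comm c]

lemma brk_smul_right (c : ℂ) (x y : gC) : brk x (c • y) = c • brk x y := by
  simp [brk, Prod.ext_iff, _root_.map_smul, Prod.smul_def, smul_comm c]

lemma brk_anticomm (x y : gC) : brk x y = - brk y x := by
  have h : ∀ a b : Fin 3 → ℂ, (2:ℂ) • (a ⨯₃ b) = -((2:ℂ) • (b ⨯₃ a)) := fun a b => by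
    rw [← smul_neg, cross_anticomm]
  exact Prod.ext (h _ _) (h _ _)

set_option maxHeartbeats 1000000 in
lemma brk_gen (t : ℂ) : brk Zb1 Zb1 = 0 ∧ brk Zb1 Zb2 = 0 ∧ brk Zb2 Zb2 = 0 ∧
    brk Zb1 (Zb3 + t • Z3) = (Complex.I * (1 + t)) • Zb1 ∧
    brk Zb2 (Zb3 + t • Z3) = (t - 1) • Zb2 ∧
    brk (Zb3 + t • Z3) (Zb3 + t • Z3) = 0 := by
  refine ⟨?_, ?_, ?_, ?_, ?_, ?_⟩ <;>
  · refine Prod.ext (funext fun i => ?_) (funext fun i => ?_) <;>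
    fin_cases i <;>
    simp [brk, Zb1, Zb2, Zb3, Z3, e, f, cross_apply, Pi.single_apply] <;>
    ring_nf <;> simp [Complex.I_sq] <;> ring_nf

/-- for every `t ∈ ℂ`, the space `W_t` is a Lie subalgebra of `g_ℂ`,
i.e. it is closed under the bracket (integrability of `J_t`). -/
theorem stmt1 (t : ℂ) : ∀ x ∈ W t, ∀ y ∈ W t, brk x y ∈ W t := by
  obtain ⟨h11, h12, h22, h13, h23, h33⟩ := brk_gen t
  have hZb1 : Zb1 ∈ W t := Submodule.subset_span (by simp)
  have hZb2 : Zb2 ∈ W t := Submodule.subset_span (by simp)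
  have hX3 : Zb3 + t • Z3 ∈ W t := Submodule.subset_span (by simp)
  have key : ∀ x ∈ ({Zb1, Zb2, Zb3 + t • Z3} : Set gC),
      ∀ y ∈ ({Zb1, Zb2, Zb3 + t • Z3} : Set gC), brk x y ∈ W t := by
    rintro x (rfl | rfl | rfl) y (rfl | rfl | rfl)
    · rw [h11]; exact (W t).zero_mem
    · rw [h12]; exact (W t).zero_mem
    · rw [h13]; exact (W t).smul_mem _ hZb1
    · rw [brk_anticomm, h12]; simpa using (W t).zero_mem
    · rw [h22]; exact (W t).zero_mem
    · rw [h23]; exact (W t).smul_mem _ hZb2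
    · rw [brk_anticomm, h13]; exact (W t).neg_mem ((W t).smul_mem _ hZb1)
    · rw [brk_anticomm, h23]; exact (W t).neg_mem ((W t).smul_mem _ hZb2)
    · rw [h33]; exact (W t).zero_mem
  intro x hx
  induction hx using Submodule.span_induction with
  | mem x hxg =>
      intro y hy
      induction hy using Submodule.span_induction with
      | mem y hyg => exact key x hxg y hyg
      | zero => simp [brk]; exact (W t).zero_mem
      | add y z _ _ hy hz => rw [brk_add_right]; exact (W t).add_mem hy hz
      | smul c y _ hy => rw [brk_smul_right]; exact (W t).smul_mem c hy
  | zero => intro y hy; simp [brk]; exact (W t).zero_mem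
  | add x z _ _ hx hz =>
      intro y hy; rw [brk_add_left]; exact (W t).add_mem (hx y hy) (hz y hy)
  | smul c x _ hx =>
      intro y hy; rw [brk_smul_left]; exact (W t).smul_mem c (hx y hy)

end
end

section
/- For every t ∈ ℂ with |t| < 1, one has ∂_t∂̄_t(φ3∧φ̄3) = A_t · φ1∧φ2∧φ̄1∧φ̄2, where A_t := (t−i)(conj(t)+1) + (t+1)(conj(t)+i) = 2(|t|² + Re(t) − Im(t)). Consequently, if |t|² + Re(t) − Im(t) ≠ 0, then φ1∧φ̄1∧φ2∧φ̄2 = ∂_t∂̄_t( −(1/A_t)·φ3∧φ̄3 ), so the cup product [φ1∧φ̄1]·[φ2∧φ̄2] vanishes in H_BC^{2,2}(t). -/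
open Complex

noncomputable section

/-- The 64-dimensional exterior algebra on six generators, modelled as
functions from subsets of `Fin 6` to `ℂ`. The generators `φ 0, φ 1, φ 2`
represent `φ1, φ2, φ3` (bidegree `(1,0)`) and `φ 3, φ 4, φ 5` represent
`φ̄1, φ̄2, φ̄3` (bidegree `(0,1)`). -/
abbrev Lam : Type := Finset (Fin 6) → ℂ

/-- Basis monomial indexed by a subset of the generators. -/
def mon (S : Finset (Fin 6)) : Lam := Pi.single S 1

/-- The generators. -/
def φ (j : Fin 6) : Lam := mon {j}

/-- The Koszul sign. -/
def wsign (T U : Finset (Fin 6)) : ℂ :=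
  (-1 : ℂ) ^ (((T ×ˢ U).filter fun p => p.2 < p.1).card)

/-- The wedge product. -/
def wedge (x y : Lam) : Lam :=
  fun S => ∑ T ∈ S.powerset, wsign T (S \ T) * x T * y (S \ T)

infixr:70 " ⋏ " => wedge

/-- The bidegree-`(p,q)` component `Λ^{p,q}`. -/
def Lpq (p q : ℕ) : Submodule ℂ Lam where
  carrier := {x | ∀ S : Finset (Fin 6),
    ¬((S.filter fun i : Fin 6 => (i : ℕ) < 3).card = p ∧ (S.filter fun i : Fin 6 => 3 ≤ (i : ℕ)).card = q) →
      x S = 0}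
  add_mem' := by intro a b ha hb S hS; simp [ha S hS, hb S hS]
  zero_mem' := by intro S _; rfl
  smul_mem' := by intro c x hx S hS; simp [hx S hS]

/-- The total-degree-`k` component. -/
def Ldeg (k : ℕ) : Submodule ℂ Lam where
  carrier := {x | ∀ S : Finset (Fin 6), S.card ≠ k → x S = 0}
  add_mem' := by intro a b ha hb S hS; simp [ha S hS, hb S hS]
  zero_mem' := by intro S _; rfl
  smul_mem' := by intro c x hx S hS; simp [hx S hS]

/-- `D` is a graded derivation of bidegree `(a,b)`: it maps `Λ^{p,q}` to `Λ^{p+a,q+b}` and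
satisfies the graded Leibniz rule with the sign of the total degree. -/
def IsDer (D : Lam →ₗ[ℂ] Lam) (a b : ℕ) : Prop :=
  (∀ p q : ℕ, ∀ x ∈ Lpq p q, D x ∈ Lpq (p + a) (q + b)) ∧
  (∀ k : ℕ, ∀ x ∈ Ldeg k, ∀ y : Lam,
    D (x ⋏ y) = (D x) ⋏ y + ((-1 : ℂ)) ^ k • (x ⋏ D y))

/-- `D` is the operator `∂_t` : the graded derivation of bidegree `(1,0)` determined on the
generators by the structure equations of the deformed Calabi–Eckmann structure `J_t`
(the values on the conjugate generators `φ 3, φ 4, φ 5` being obtained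
by applying the conjugation `σ` to the values of `∂̄_t`). -/
def IsDelT (t : ℂ) (D : Lam →ₗ[ℂ] Lam) : Prop :=
  IsDer D 1 0 ∧
  D (φ 0) = (Complex.I * ((starRingEnd ℂ) t + 1) / (1 - Complex.normSq t)) • (φ 0 ⋏ φ 2) ∧
  D (φ 1) = ((1 - (starRingEnd ℂ) t) / (1 - Complex.normSq t)) • (φ 1 ⋏ φ 2) ∧
  D (φ 2) = 0 ∧
  D (φ 3) = (-(Complex.I * ((starRingEnd ℂ) t + 1)) / (1 - Complex.normSq t)) • (φ 3 ⋏ φ 2) ∧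
  D (φ 4) = (((starRingEnd ℂ) t - 1) / (1 - Complex.normSq t)) • (φ 4 ⋏ φ 2) ∧
  D (φ 5) = ((starRingEnd ℂ) t + Complex.I) • (φ 3 ⋏ φ 0) + ((starRingEnd ℂ) t + 1) • (φ 4 ⋏ φ 1)

/-- `Db` is the operator `∂̄_t`. -/
def IsDelBarT (t : ℂ) (Db : Lam →ₗ[ℂ] Lam) : Prop :=
  IsDer Db 0 1 ∧
  Db (φ 0) = (Complex.I * (t + 1) / (1 - Complex.normSq t)) • (φ 0 ⋏ φ 5) ∧
  Db (φ 1) = ((t - 1) / (1 - Complex.normSq t)) • (φ 1 ⋏ φ 5) ∧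
  Db (φ 2) = (t - Complex.I) • (φ 0 ⋏ φ 3) + (t + 1) • (φ 1 ⋏ φ 4) ∧
  Db (φ 3) = (-(Complex.I * (t + 1)) / (1 - Complex.normSq t)) • (φ 3 ⋏ φ 5) ∧
  Db (φ 4) = ((1 - t) / (1 - Complex.normSq t)) • (φ 4 ⋏ φ 5) ∧
  Db (φ 5) = 0

/-- The Bott–Chern cocycles in bidegree `(p,q)` : `Ker ∂ ∩ Ker ∂̄ ∩ Λ^{p,q}`. -/
def Kbc (D Db : Lam →ₗ[ℂ] Lam) (p q : ℕ) : Submodule ℂ Lam :=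
  LinearMap.ker D ⊓ LinearMap.ker Db ⊓ Lpq p q

/-- The Bott–Chern coboundaries in bidegree `(p,q)` : `∂∂̄(Λ^{p-1,q-1})`
(zero when `p = 0` or `q = 0`). -/
def Ibc (D Db : Lam →ₗ[ℂ] Lam) (p q : ℕ) : Submodule ℂ Lam :=
  if p = 0 ∨ q = 0 then ⊥ else Submodule.map (D ∘ₗ Db) (Lpq (p - 1) (q - 1))

/-- The Aeppli cocycles in bidegree `(p,q)` : `Ker (∂∂̄) ∩ Λ^{p,q}`. -/
def Ka (D Db : Lam →ₗ[ℂ] Lam) (p q : ℕ) : Submodule ℂ Lam :=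
  LinearMap.ker (D ∘ₗ Db) ⊓ Lpq p q

/-- The Aeppli coboundaries in bidegree `(p,q)` : `∂(Λ^{p-1,q}) + ∂̄(Λ^{p,q-1})`. -/
def Ia (D Db : Lam →ₗ[ℂ] Lam) (p q : ℕ) : Submodule ℂ Lam :=
  (if p = 0 then ⊥ else Submodule.map D (Lpq (p - 1) q)) ⊔
  (if q = 0 then ⊥ else Submodule.map Db (Lpq p (q - 1)))

end

section Helpers

lemma smul_wedge (c : ℂ) (x y : Lam) : (c • x) ⋏ y = c • (x ⋏ y) := by
  funext S
  simp only [wedge, Pi.smul_apply, smul_eq_mul, Finset.mul_sum]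
  exact Finset.sum_congr rfl fun T _ => by ring

lemma wedge_smul (c : ℂ) (x y : Lam) : x ⋏ (c • y) = c • (x ⋏ y) := by
  funext S
  simp only [wedge, Pi.smul_apply, smul_eq_mul, Finset.mul_sum]
  exact Finset.sum_congr rfl fun T _ => by ring

lemma add_wedge (x y z : Lam) : (x + y) ⋏ z = x ⋏ z + y ⋏ z := by
  funext S
  simp only [wedge, Pi.add_apply, ← Finset.sum_add_distrib]
  exact Finset.sum_congr rfl fun T _ => by ring

lemma wedge_add (x y z : Lam) : x ⋏ (y + z) = x ⋏ y + x ⋏ z := by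
  funext S
  simp only [wedge, Pi.add_apply, ← Finset.sum_add_distrib]
  exact Finset.sum_congr rfl fun T _ => by ring

lemma wedge_zero (x : Lam) : x ⋏ (0 : Lam) = 0 := by
  funext S; simp [wedge]

lemma zero_wedge (x : Lam) : (0 : Lam) ⋏ x = 0 := by
  funext S; simp [wedge]

lemma mon_wedge {A B : Finset (Fin 6)} (h : Disjoint A B) :
    mon A ⋏ mon B = wsign A B • mon (A ∪ B) := by
  funext S
  simp only [wedge, mon, Pi.single_apply, Pi.smul_apply, smul_eq_mul]
  by_cases hA : A ⊆ S
  · rw [Finset.sum_eq_single_of_mem A (Finset.mem_powerset.2 hA)]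
    · by_cases hB : S \ A = B
      · subst hB
        simp [Finset.union_sdiff_of_subset hA]
      · have hS : S ≠ A ∪ B := by
          rintro rfl; exact hB (Finset.union_sdiff_cancel_left h)
        simp [hB, hS]
    · intro T _ hT; simp [hT]
  · rw [Finset.sum_eq_zero]
    · have hS : S ≠ A ∪ B := fun e => hA (e ▸ Finset.subset_union_left)
      simp [hS]
    · intro T hTm
      have : T ≠ A := fun e => hA (e ▸ Finset.mem_powerset.1 hTm)
      simp [this]

lemma mon_wedge_zero {A B : Finset (Fin 6)} (h : ¬ Disjoint A B) :
    mon A ⋏ mon B = 0 := by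
  funext S
  simp only [wedge, mon, Pi.single_apply]
  rw [Finset.sum_eq_zero]
  · rfl
  intro T hTm
  by_cases hT : T = A
  · subst hT
    have hB : S \ T ≠ B := by rintro rfl; exact h (Finset.disjoint_sdiff)
    simp [hB]
  · simp [hT]

lemma mwedge_pos {A B C : Finset (Fin 6)} (h : Disjoint A B) (hU : A ∪ B = C)
    (he : Even (((A ×ˢ B).filter fun p => p.2 < p.1).card)) :
    mon A ⋏ mon B = mon C := by
  rw [mon_wedge h, hU]
  unfold wsign
  rw [Even.neg_one_pow he, one_smul]

lemma mwedge_neg {A B C : Finset (Fin 6)} (h : Disjoint A B) (hU : A ∪ B = C)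
    (ho : Odd (((A ×ˢ B).filter fun p => p.2 < p.1).card)) :
    mon A ⋏ mon B = (-1 : ℂ) • mon C := by
  rw [mon_wedge h, hU]
  unfold wsign
  rw [Odd.neg_one_pow ho]

lemma mon_mem_Ldeg (S : Finset (Fin 6)) (k : ℕ) (hk : S.card = k) : mon S ∈ Ldeg k := by
  intro T hT
  simp only [mon, Pi.single_apply]
  rw [if_neg]
  rintro rfl; exact hT hk

lemma mon_mem_Lpq (S : Finset (Fin 6)) (p q : ℕ)
    (hp : (S.filter fun i : Fin 6 => (i : ℕ) < 3).card = p)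
    (hq : (S.filter fun i : Fin 6 => 3 ≤ (i : ℕ)).card = q) : mon S ∈ Lpq p q := by
  intro T hT
  simp only [mon, Pi.single_apply]
  rw [if_neg]
  rintro rfl; exact hT ⟨hp, hq⟩

end Helpers

/-- `∂_t∂̄_t(φ3∧φ̄3) = A_t · φ1∧φ2∧φ̄1∧φ̄2` where
`A_t = (t-i)(conj t+1) + (t+1)(conj t+i) = 2(|t|² + Re t - Im t)`; consequently, if
`|t|² + Re t - Im t ≠ 0` then `φ1∧φ̄1∧φ2∧φ̄2 = ∂_t∂̄_t(-(1/A_t) φ3∧φ̄3)` and the cup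
product `[φ1∧φ̄1]·[φ2∧φ̄2]` vanishes in `H_BC^{2,2}(t)`. -/
theorem stmt6 (t : ℂ) (ht : ‖t‖ < 1)
    (D Db : Lam →ₗ[ℂ] Lam) (hD : IsDelT t D) (hDb : IsDelBarT t Db) :
    D (Db (φ 2 ⋏ φ 5)) =
      ((t - Complex.I) * ((starRingEnd ℂ) t + 1) + (t + 1) * ((starRingEnd ℂ) t + Complex.I)) •
        (φ 0 ⋏ φ 1 ⋏ φ 3 ⋏ φ 4) ∧
    (t - Complex.I) * ((starRingEnd ℂ) t + 1) + (t + 1) * ((starRingEnd ℂ) t + Complex.I) =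
      2 * ((Complex.normSq t : ℂ) + (t.re : ℂ) - (t.im : ℂ)) ∧
    (Complex.normSq t + t.re - t.im ≠ 0 →
      φ 0 ⋏ φ 3 ⋏ φ 1 ⋏ φ 4 =
        D (Db ((-((t - Complex.I) * ((starRingEnd ℂ) t + 1) +
              (t + 1) * ((starRingEnd ℂ) t + Complex.I))⁻¹) • (φ 2 ⋏ φ 5))) ∧
      (φ 0 ⋏ φ 3) ⋏ (φ 1 ⋏ φ 4) ∈ Ibc D Db 2 2) := by
  obtain ⟨⟨-, hDL⟩, hD0, hD1, hD2, hD3, hD4, hD5⟩ := hD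
  obtain ⟨⟨-, hDbL⟩, hb0, hb1, hb2, hb3, hb4, hb5⟩ := hDb
  have hph : ∀ j : Fin 6, φ j = mon {j} := fun j => rfl
  simp only [hph] at hD0 hD1 hD3 hD4 hD5 hb2 hb5 ⊢
  -- concrete wedge products of monomials
  have w02 : mon {0} ⋏ mon {2} = mon {0,2} := mwedge_pos (by decide) (by decide) (by decide)
  have w023 : mon {0,2} ⋏ mon {3} = mon {0,2,3} := mwedge_pos (by decide) (by decide) (by decide)
  have w32 : mon {3} ⋏ mon {2} = (-1:ℂ) • mon {2,3} := mwedge_neg (by decide) (by decide) (by decide)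
  have w0_23 : mon {0} ⋏ mon {2,3} = mon {0,2,3} := mwedge_pos (by decide) (by decide) (by decide)
  have w03 : mon {0} ⋏ mon {3} = mon {0,3} := mwedge_pos (by decide) (by decide) (by decide)
  have w12 : mon {1} ⋏ mon {2} = mon {1,2} := mwedge_pos (by decide) (by decide) (by decide)
  have w124 : mon {1,2} ⋏ mon {4} = mon {1,2,4} := mwedge_pos (by decide) (by decide) (by decide)
  have w42 : mon {4} ⋏ mon {2} = (-1:ℂ) • mon {2,4} := mwedge_neg (by decide) (by decide) (by decide)
  have w1_24 : mon {1} ⋏ mon {2,4} = mon {1,2,4} := mwedge_pos (by decide) (by decide) (by decide)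
  have w14 : mon {1} ⋏ mon {4} = mon {1,4} := mwedge_pos (by decide) (by decide) (by decide)
  have w035 : mon {0,3} ⋏ mon {5} = mon {0,3,5} := mwedge_pos (by decide) (by decide) (by decide)
  have w145 : mon {1,4} ⋏ mon {5} = mon {1,4,5} := mwedge_pos (by decide) (by decide) (by decide)
  have w30 : mon {3} ⋏ mon {0} = (-1:ℂ) • mon {0,3} := mwedge_neg (by decide) (by decide) (by decide)
  have w41 : mon {4} ⋏ mon {1} = (-1:ℂ) • mon {1,4} := mwedge_neg (by decide) (by decide) (by decide)
  have z03 : mon {0,3} ⋏ mon {0,3} = 0 := mon_wedge_zero (by decide)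
  have z14 : mon {1,4} ⋏ mon {1,4} = 0 := mon_wedge_zero (by decide)
  have w0314 : mon {0,3} ⋏ mon {1,4} = (-1:ℂ) • mon {0,1,3,4} := mwedge_neg (by decide) (by decide) (by decide)
  have w1403 : mon {1,4} ⋏ mon {0,3} = (-1:ℂ) • mon {0,1,3,4} := mwedge_neg (by decide) (by decide) (by decide)
  have w34 : mon {3} ⋏ mon {4} = mon {3,4} := mwedge_pos (by decide) (by decide) (by decide)
  have w134 : mon {1} ⋏ mon {3,4} = mon {1,3,4} := mwedge_pos (by decide) (by decide) (by decide)
  have w0134 : mon {0} ⋏ mon {1,3,4} = mon {0,1,3,4} := mwedge_pos (by decide) (by decide) (by decide)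
  have w314 : mon {3} ⋏ mon {1,4} = (-1:ℂ) • mon {1,3,4} := mwedge_neg (by decide) (by decide) (by decide)
  have w25 : mon {2} ⋏ mon {5} = mon {2,5} := mwedge_pos (by decide) (by decide) (by decide)
  -- D vanishes on mon {0,3} and mon {1,4}
  have hD03 : D (mon {0} ⋏ mon {3}) = 0 := by
    rw [hDL 1 (mon {0}) (mon_mem_Ldeg _ _ (by decide)) (mon {3}), hD0, hD3]
    simp only [smul_wedge, wedge_smul, w02, w023, w32, w0_23, smul_smul, pow_one]
    module
  have hD14 : D (mon {1} ⋏ mon {4}) = 0 := by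
    rw [hDL 1 (mon {1}) (mon_mem_Ldeg _ _ (by decide)) (mon {4}), hD1, hD4]
    simp only [hph, smul_wedge, wedge_smul, w12, w124, w42, w1_24, smul_smul, pow_one]
    module
  rw [w03, w14] at hb2
  have hD03' : D (mon {0,3}) = 0 := by rw [← w03]; exact hD03
  have hD14' : D (mon {1,4}) = 0 := by rw [← w14]; exact hD14
  -- ∂̄ of φ3 ∧ φ̄3
  have hDb25 : Db (mon {2} ⋏ mon {5}) =
      (t - Complex.I) • mon {0,3,5} + (t + 1) • mon {1,4,5} := by
    rw [hDbL 1 (mon {2}) (mon_mem_Ldeg _ _ (by decide)) (mon {5}), hb2, hb5, wedge_zero,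
      smul_zero, add_zero, add_wedge, smul_wedge, smul_wedge, w035, w145]
  -- ∂ of the two three-forms
  have hD035 : D (mon {0,3} ⋏ mon {5}) = ((starRingEnd ℂ) t + 1) • mon {0,1,3,4} := by
    rw [hDL 2 (mon {0,3}) (mon_mem_Ldeg _ _ (by decide)) (mon {5}), hD03', hD5, zero_wedge,
      zero_add]
    simp only [wedge_add, wedge_smul, w30, w41, z03, w0314, smul_smul, smul_zero]
    module
  have hD145 : D (mon {1,4} ⋏ mon {5}) = ((starRingEnd ℂ) t + Complex.I) • mon {0,1,3,4} := by
    rw [hDL 2 (mon {1,4}) (mon_mem_Ldeg _ _ (by decide)) (mon {5}), hD14', hD5, zero_wedge,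
      zero_add]
    simp only [wedge_add, wedge_smul, w30, w41, z14, w1403, smul_smul, smul_zero]
    module
  set A : ℂ := (t - Complex.I) * ((starRingEnd ℂ) t + 1) +
      (t + 1) * ((starRingEnd ℂ) t + Complex.I) with hAdef
  have hmain : D (Db (mon {2} ⋏ mon {5})) = A • mon {0,1,3,4} := by
    rw [hDb25, map_add, map_smul, map_smul, ← w035, ← w145, hD035, hD145]
    module
  have hA2 : A = 2 * ((Complex.normSq t : ℂ) + (t.re : ℂ) - (t.im : ℂ)) := by
    rw [hAdef]
    simp only [Complex.ext_iff, Complex.add_re, Complex.add_im, Complex.sub_re, Complex.sub_im,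
      Complex.mul_re, Complex.mul_im, Complex.conj_re, Complex.conj_im, Complex.I_re,
      Complex.I_im, Complex.one_re, Complex.one_im, Complex.ofReal_re, Complex.ofReal_im,
      Complex.normSq_apply, Complex.re_ofNat, Complex.im_ofNat]
    constructor <;> ring
  refine ⟨by rw [hmain, w34, w134, w0134], hA2, fun h => ?_⟩
  have hAne : A ≠ 0 := by
    rw [hA2]
    intro h0
    apply h
    have h1 : ((Complex.normSq t + t.re - t.im : ℝ) : ℂ) = 0 := by
      push_cast
      linear_combination h0 / 2
    exact_mod_cast h1
  have hscal : -A⁻¹ * A = -1 := by field_simp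
  constructor
  · rw [map_smul, map_smul, hmain, smul_smul, hscal, w14, w314, wedge_smul, w0134]
  · have hIbc : Ibc D Db 2 2 = Submodule.map (D ∘ₗ Db) (Lpq 1 1) := by
      unfold Ibc
      norm_num
    rw [hIbc]
    refine Submodule.mem_map.2 ⟨(-A⁻¹) • (mon {2} ⋏ mon {5}), ?_, ?_⟩
    · exact Submodule.smul_mem _ _ (by rw [w25]; exact mon_mem_Lpq _ 1 1 (by decide) (by decide))
    · simp only [LinearMap.coe_comp, Function.comp_apply]
      rw [map_smul, map_smul, hmain, smul_smul, hscal, w03, w14, w0314]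
end
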